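/- For every a > 0, the function ϱ(a) = ∫₀^∞ sinh(2a)/(cosh(a+t) · √(sinh²(2a+2t) - sinh²(2a))) dt satisfies ϱ(a) < π/(4 cosh a). In particular ϱ(a) → 0 as a → ∞. -/

import Mathlib

open Real MeasureTheory Filter

noncomputable def varrho (a : ℝ) : ℝ :=
  ∫ t in Set.Ioi (0:ℝ),
    Real.sinh (2*a) /
      (Real.cosh (a+t) * Real.sqrt (Real.sinh (2*(a+t))^2 - Real.sinh (2*a)^2))

namespace VarrhoAux

noncomputable def fA (a t : ℝ) : ℝ :=
  Real.sinh (2*a) /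
    (Real.cosh (a+t) * Real.sqrt (Real.sinh (2*(a+t))^2 - Real.sinh (2*a)^2))

noncomputable def hA (a t : ℝ) : ℝ :=
  2 * Real.sinh (2*a) * Real.cosh (2*(a+t)) /
    (Real.sinh (2*(a+t)) * Real.sqrt (Real.sinh (2*(a+t))^2 - Real.sinh (2*a)^2))

noncomputable def GA (a t : ℝ) : ℝ :=
  Real.arcsin (Real.sinh (2*a) / Real.sinh (2*(a+t)))

lemma varrho_eq (a : ℝ) : varrho a = ∫ t in Set.Ioi (0:ℝ), fA a t := rfl

lemma sinh_lt (a : ℝ) (ha : 0 < a) {t : ℝ} (ht : 0 < t) :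
    Real.sinh (2*a) < Real.sinh (2*(a+t)) :=
  Real.sinh_lt_sinh.2 (by linarith)

lemma sq_sub_pos (a : ℝ) (ha : 0 < a) {t : ℝ} (ht : 0 < t) :
    0 < Real.sinh (2*(a+t))^2 - Real.sinh (2*a)^2 := by
  have h1 : 0 < Real.sinh (2*a) := Real.sinh_pos_iff.2 (by linarith)
  have h2 := sinh_lt a ha ht
  nlinarith

lemma hasDeriv_negGA (a : ℝ) (ha : 0 < a) {x : ℝ} (hx : 0 < x) :
    HasDerivAt (fun t => -GA a t) (hA a x) x := by
  have hApos : 0 < Real.sinh (2*a) := Real.sinh_pos_iff.2 (by linarith)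
  have hSgt : Real.sinh (2*a) < Real.sinh (2*(a+x)) := sinh_lt a ha hx
  have hSpos : 0 < Real.sinh (2*(a+x)) := lt_trans hApos hSgt
  set A := Real.sinh (2*a) with hAdef
  set S := Real.sinh (2*(a+x)) with hSdef
  set C := Real.cosh (2*(a+x)) with hCdef
  have hSd : HasDerivAt (fun t => Real.sinh (2*(a+t))) (C * 2) x := by
    have h1 : HasDerivAt (fun t : ℝ => 2*(a+t)) 2 x := by
      simpa using ((hasDerivAt_id x).const_add a).const_mul 2
    exact (Real.hasDerivAt_sinh (2*(a+x))).comp x h1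
  have hyd : HasDerivAt (fun t => A / Real.sinh (2*(a+t)))
      ((0 * S - A * (C * 2)) / S^2) x :=
    (hasDerivAt_const x A).div hSd (ne_of_gt hSpos)
  have hy1 : A / S ≠ -1 := by
    have : 0 < A / S := div_pos hApos hSpos
    linarith
  have hy2 : A / S ≠ 1 := by
    have : A / S < 1 := (div_lt_one hSpos).2 hSgt
    linarith
  have harc := ((Real.hasDerivAt_arcsin hy1 hy2).comp x hyd).neg
  have hval : -(1 / Real.sqrt (1 - (A/S)^2) * ((0 * S - A * (C * 2)) / S^2))
      = hA a x := by
    have hD : 0 < S^2 - A^2 := by nlinarith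
    have h1 : Real.sqrt (1 - (A/S)^2) = Real.sqrt (S^2 - A^2) / S := by
      rw [show 1 - (A/S)^2 = (S^2 - A^2)/S^2 by field_simp,
        Real.sqrt_div hD.le, Real.sqrt_sq hSpos.le]
    have hDs : 0 < Real.sqrt (S^2 - A^2) := Real.sqrt_pos.2 hD
    rw [h1]
    simp only [hA, ← hAdef, ← hSdef, ← hCdef]
    field_simp
    ring
  rw [← hval]
  exact harc

lemma GA_tendsto (a : ℝ) : Tendsto (fun t => -GA a t) atTop (nhds 0) := by
  have h1 : Tendsto (fun t : ℝ => Real.sinh (2*(a+t))) atTop atTop := by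
    apply tendsto_atTop_mono' _ _ tendsto_id
    filter_upwards [eventually_ge_atTop (1 - a), eventually_ge_atTop (-2*a)] with t ht ht2
    show t ≤ Real.sinh (2*(a+t))
    calc t ≤ 2*(a+t) := by linarith
      _ ≤ Real.sinh (2*(a+t)) := Real.self_le_sinh_iff.2 (by linarith)
  have h2 : Tendsto (fun t : ℝ => Real.sinh (2*a) / Real.sinh (2*(a+t)))
      atTop (nhds 0) := Tendsto.div_atTop tendsto_const_nhds h1
  have h3 := (Real.continuous_arcsin.tendsto 0).comp h2
  simp only [Function.comp, Real.arcsin_zero] at h3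
  simpa [GA] using h3.neg

lemma hA_nonneg (a : ℝ) (ha : 0 < a) {t : ℝ} (ht : 0 < t) : 0 ≤ hA a t := by
  have hApos : 0 ≤ Real.sinh (2*a) := (Real.sinh_pos_iff.2 (by linarith)).le
  have hSpos : 0 ≤ Real.sinh (2*(a+t)) := (Real.sinh_pos_iff.2 (by linarith)).le
  unfold hA
  positivity

lemma integral_hA (a : ℝ) (ha : 0 < a) {ε : ℝ} (hε : 0 < ε) :
    IntegrableOn (hA a) (Set.Ioi ε) ∧ (∫ t in Set.Ioi ε, hA a t) = GA a ε := by
  have hderiv : ∀ x ∈ Set.Ici ε, HasDerivAt (fun t => -GA a t) (hA a x) x :=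
    fun x hx => hasDeriv_negGA a ha (lt_of_lt_of_le hε hx)
  have hpos : ∀ x ∈ Set.Ioi ε, 0 ≤ hA a x :=
    fun x hx => hA_nonneg a ha (lt_trans hε hx)
  refine ⟨integrableOn_Ioi_deriv_of_nonneg' hderiv hpos (GA_tendsto a), ?_⟩
  rw [integral_Ioi_of_hasDerivAt_of_nonneg' hderiv hpos (GA_tendsto a)]
  ring

lemma fA_lt (a : ℝ) (ha : 0 < a) {t : ℝ} (ht : 0 < t) :
    fA a t < hA a t / (2 * Real.cosh a) := by
  have hApos : 0 < Real.sinh (2*a) := Real.sinh_pos_iff.2 (by linarith)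
  have hSpos : 0 < Real.sinh (2*(a+t)) := Real.sinh_pos_iff.2 (by linarith)
  have hD : 0 < Real.sqrt (Real.sinh (2*(a+t))^2 - Real.sinh (2*a)^2) :=
    Real.sqrt_pos.2 (sq_sub_pos a ha ht)
  set A := Real.sinh (2*a)
  set S := Real.sinh (2*(a+t))
  set C := Real.cosh (2*(a+t))
  set D := Real.sqrt (Real.sinh (2*(a+t))^2 - Real.sinh (2*a)^2)
  set c := Real.cosh (a+t)
  set b := Real.cosh a
  have hc : 0 < c := Real.cosh_pos _
  have hb : 0 < b := Real.cosh_pos _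
  have hbc : b ≤ c := by
    apply Real.cosh_le_cosh.2
    rw [abs_of_pos ha, abs_of_pos (by linarith : (0:ℝ) < a + t)]
    linarith
  have hSC : S < C := Real.sinh_lt_cosh _
  have hkey : b * S < c * C := by nlinarith
  rw [fA, hA, div_div, div_lt_div_iff₀ (by positivity) (by positivity)]
  show A * (S * D * (2 * b)) < 2 * A * C * (c * D)
  nlinarith [mul_pos hApos hD, mul_pos (mul_pos hApos hD) (sub_pos.2 hkey)]

lemma fA_nonneg (a : ℝ) (ha : 0 ≤ a) (t : ℝ) : 0 ≤ fA a t := by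
  unfold fA
  apply div_nonneg (Real.sinh_nonneg_iff.2 (by linarith))
  positivity

lemma measurable_fA (a : ℝ) : Measurable (fA a) := by
  unfold fA; fun_prop

lemma seq_union_Ioi : (⋃ n : ℕ, Set.Ioi ((n:ℝ)+1)⁻¹) = Set.Ioi (0:ℝ) := by
  ext x
  simp only [Set.mem_iUnion, Set.mem_Ioi]
  constructor
  · rintro ⟨n, hn⟩
    have : (0:ℝ) < ((n:ℝ)+1)⁻¹ := by positivity
    linarith
  · intro hx
    obtain ⟨n, hn⟩ := exists_nat_gt x⁻¹
    exact ⟨n, by rw [inv_lt_comm₀ (by positivity) hx] ; push_cast; linarith⟩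

lemma seq_union_Ioc : (⋃ n : ℕ, Set.Ioc ((n:ℝ)+1)⁻¹ 1) = Set.Ioc (0:ℝ) 1 := by
  ext x
  simp only [Set.mem_iUnion, Set.mem_Ioc]
  constructor
  · rintro ⟨n, hn, hn2⟩
    have : (0:ℝ) < ((n:ℝ)+1)⁻¹ := by positivity
    exact ⟨by linarith, hn2⟩
  · rintro ⟨hx, hx1⟩
    obtain ⟨n, hn⟩ := exists_nat_gt x⁻¹
    exact ⟨n, by rw [inv_lt_comm₀ (by positivity) hx]; push_cast; linarith, hx1⟩

lemma main (a : ℝ) (ha : 0 < a) : varrho a < π / (4 * Real.cosh a) := by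
  have hb : 0 < Real.cosh a := Real.cosh_pos _
  have hπ : 0 < π / (4 * Real.cosh a) := by positivity
  rw [varrho_eq]
  by_cases hf : IntegrableOn (fA a) (Set.Ioi (0:ℝ)) volume
  · -- main case
    set b := Real.cosh a
    -- integral over Ioi 1 : strict
    have h1 := integral_hA a ha one_pos
    have hf1 : IntegrableOn (fA a) (Set.Ioi (1:ℝ)) volume :=
      hf.mono_set (Set.Ioi_subset_Ioi zero_le_one)
    have hg1 : IntegrableOn (fun t => hA a t / (2*b)) (Set.Ioi (1:ℝ)) volume :=
      h1.1.div_const _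
    have hstrict : (∫ t in Set.Ioi (1:ℝ), fA a t)
        < ∫ t in Set.Ioi (1:ℝ), hA a t / (2*b) := by
      have hposint : 0 < ∫ t in Set.Ioi (1:ℝ), (hA a t / (2*b) - fA a t) := by
        rw [setIntegral_pos_iff_support_of_nonneg_ae]
        · have : Set.Ioi (1:ℝ) ⊆ Function.support (fun t => hA a t / (2*b) - fA a t) := by
            intro x hx
            have := fA_lt a ha (lt_trans one_pos hx)
            simp only [Function.mem_support]
            intro hcon
            rw [sub_eq_zero] at hcon
            exact absurd hcon.symm (ne_of_lt this)
          refine lt_of_lt_of_le ?_ (measure_mono (Set.subset_inter this Set.Subset.rfl))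
          simp [Real.volume_Ioi]
        · filter_upwards [ae_restrict_mem measurableSet_Ioi] with x hx
          exact sub_nonneg.2 (le_of_lt (fA_lt a ha (lt_trans one_pos hx)))
        · exact hg1.sub hf1
      rw [integral_sub hg1 hf1] at hposint
      linarith
    have hval1 : (∫ t in Set.Ioi (1:ℝ), hA a t / (2*b)) = GA a 1 / (2*b) := by
      rw [integral_div, h1.2]
    -- integral over Ioc 0 1 : limit bound
    have hIoc : (∫ t in Set.Ioc (0:ℝ) 1, fA a t) ≤ (π/2 - GA a 1) / (2*b) := by
      have hmono : Monotone (fun n : ℕ => Set.Ioc ((n:ℝ)+1)⁻¹ 1) := by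
        intro m n hmn
        apply Set.Ioc_subset_Ioc_left
        apply inv_anti₀ (by positivity)
        have : (m:ℝ) ≤ n := Nat.cast_le.2 hmn
        linarith
      have hunion := seq_union_Ioc
      have hfi : IntegrableOn (fA a) (⋃ n : ℕ, Set.Ioc ((n:ℝ)+1)⁻¹ 1) volume := by
        rw [hunion]
        exact hf.mono_set (Set.Ioc_subset_Ioi_self)
      have htend := tendsto_setIntegral_of_monotone
        (fun n => measurableSet_Ioc) hmono hfi
      rw [hunion] at htend
      refine le_of_tendsto htend ?_
      filter_upwards with n
      set ε : ℝ := ((n:ℝ)+1)⁻¹ with hεdef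
      have hε : 0 < ε := by positivity
      have hε1 : ε ≤ 1 := by
        rw [hεdef]
        apply inv_le_one_of_one_le₀
        push_cast; linarith [Nat.cast_nonneg (α := ℝ) n]
      by_cases hεone : ε ≤ 1
      swap; · exact absurd hε1 hεone
      -- ∫ over Ioc ε 1 of fA ≤ ∫ over Ioc ε 1 of hA/(2b) = (GA ε - GA 1)/(2b)
      have hhε := integral_hA a ha hε
      have hhIoc : IntegrableOn (hA a) (Set.Ioc ε 1) volume :=
        hhε.1.mono_set (Set.Ioc_subset_Ioi_self)
      have hfIoc : IntegrableOn (fA a) (Set.Ioc ε 1) volume :=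
        hf.mono_set (fun x hx => lt_trans hε hx.1)
      have step1 : (∫ t in Set.Ioc ε 1, fA a t)
          ≤ ∫ t in Set.Ioc ε 1, hA a t / (2*b) := by
        apply setIntegral_mono_on hfIoc (hhIoc.div_const _) measurableSet_Ioc
        intro x hx
        exact le_of_lt (fA_lt a ha (lt_trans hε hx.1))
      have step2 : (∫ t in Set.Ioc ε 1, hA a t) = GA a ε - GA a 1 := by
        have hsplit : (∫ t in Set.Ioi ε, hA a t)
            = (∫ t in Set.Ioc ε 1, hA a t) + ∫ t in Set.Ioi (1:ℝ), hA a t := by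
          rw [← setIntegral_union (Set.Ioc_disjoint_Ioi le_rfl) measurableSet_Ioi
            hhIoc h1.1, Set.Ioc_union_Ioi_eq_Ioi hε1]
        rw [hhε.2, h1.2] at hsplit
        linarith
      have step3 : (∫ t in Set.Ioc ε 1, hA a t / (2*b))
          = (GA a ε - GA a 1) / (2*b) := by rw [integral_div, step2]
      refine le_trans step1 ?_
      rw [step3]
      apply div_le_div_of_nonneg_right ?_ (by positivity)
      · have := Real.arcsin_le_pi_div_two (Real.sinh (2*a) / Real.sinh (2*(a+ε)))
        simp only [GA]
        linarith
    -- combine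
    have hsplit0 : (∫ t in Set.Ioi (0:ℝ), fA a t)
        = (∫ t in Set.Ioc (0:ℝ) 1, fA a t) + ∫ t in Set.Ioi (1:ℝ), fA a t := by
      rw [← setIntegral_union (Set.Ioc_disjoint_Ioi le_rfl) measurableSet_Ioi
        (hf.mono_set Set.Ioc_subset_Ioi_self) hf1, Set.Ioc_union_Ioi_eq_Ioi zero_le_one]
    rw [hsplit0]
    have : (∫ t in Set.Ioi (1:ℝ), fA a t) < GA a 1 / (2*b) := by
      rw [← hval1]; exact hstrict
    have hfinal : (π/2 - GA a 1) / (2*b) + GA a 1 / (2*b) = π / (4*b) := by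
      field_simp; ring
    linarith
  · rw [integral_undef hf]
    exact hπ

end VarrhoAux

theorem varrho_lt_and_tendsto_zero :
    (∀ a : ℝ, 0 < a → varrho a < π / (4 * Real.cosh a)) ∧
    Tendsto varrho atTop (nhds 0) := by
  constructor
  · exact fun a ha => VarrhoAux.main a ha
  · apply squeeze_zero' (g := fun a => π / (4 * Real.cosh a))
    · filter_upwards [eventually_gt_atTop (0:ℝ)] with a ha
      rw [VarrhoAux.varrho_eq]
      exact setIntegral_nonneg measurableSet_Ioi
        (fun t _ => VarrhoAux.fA_nonneg a ha.le t)
    · filter_upwards [eventually_gt_atTop (0:ℝ)] with a ha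
      exact (VarrhoAux.main a ha).le
    · apply Tendsto.div_atTop tendsto_const_nhds
      apply Tendsto.const_mul_atTop four_pos
      apply tendsto_atTop_mono' _ _ tendsto_id
      filter_upwards [eventually_ge_atTop (0:ℝ)] with x hx
      calc x ≤ Real.sinh x := Real.self_le_sinh_iff.2 hx
        _ ≤ Real.cosh x := (Real.sinh_lt_cosh x).le
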